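/- The sequence j ↦ v_2((3j)!/j!) is strictly increasing in j, for j ≥ 0. -/
import Mathlib

theorem v2_three_j_factorial_div_strictMono :
    StrictMono (fun j : ℕ => padicValNat 2 ((3 * j).factorial / j.factorial)) := by
  apply strictMono_nat_of_lt_succ
  intro j

  have hdvd : j.factorial ∣ (3 * j).factorial :=
    Nat.factorial_dvd_factorial (by omega)
  obtain ⟨k, hk⟩ := hdvd
  have hk0 : 0 < k := by
    rcases Nat.eq_zero_or_pos k with h | h
    · exfalso; rw [h, mul_zero] at hk
      exact absurd hk (Nat.factorial_pos _).ne'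
    · exact h
  have h1 : (3 * j).factorial / j.factorial = k := by
    rw [hk, Nat.mul_div_cancel_left _ (Nat.factorial_pos _)]
  have h2 : (3 * (j + 1)).factorial / (j + 1).factorial
      = k * (3 * (3 * j + 1) * (3 * j + 2)) := by
    apply Nat.div_eq_of_eq_mul_left (Nat.factorial_pos _)
    have e3 : 3 * (j + 1) = (3 * j) + 1 + 1 + 1 := by ring
    rw [e3]
    rw [Nat.factorial_succ, Nat.factorial_succ, Nat.factorial_succ, Nat.factorial_succ, hk]
    ring
  rw [h1, h2]
  have hne : 3 * (3 * j + 1) * (3 * j + 2) ≠ 0 := by positivity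
  rw [padicValNat.mul (by omega) hne]
  have : 0 < padicValNat 2 (3 * (3 * j + 1) * (3 * j + 2)) := by
    rw [padicValNat.mul (by omega) (by omega)]
    rcases Nat.even_or_odd j with ⟨m, hm⟩ | ⟨m, hm⟩
    · have : 0 < padicValNat 2 (3 * j + 2) := by
        apply one_le_padicValNat_of_dvd (by omega); omega
      omega
    · have : 0 < padicValNat 2 (3 * (3 * j + 1)) := by
        apply one_le_padicValNat_of_dvd (by omega); omega
      omega
  omega
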